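/- For f(x) = 1 - e^{-x}, the function F(x,h) = f(x+h)/(f(x)f(h)) = (1 - e^{-(x+h)})/((1-e^{-x})(1-e^{-h})) satisfies the blow-up relation F(x,a+b)F(y-x,b) + F(y,a+b)F(x-y,a) = F(x,a)F(y,b). -/
import Mathlib


/-!
STATEMENT 9: For `f(x) = 1 - e^{-x}`, the function
`F(x,h) = (1-e^{-(x+h)})/((1-e^{-x})(1-e^{-h}))` satisfies the blow-up relation
`F(x,a+b)F(y-x,b) + F(y,a+b)F(x-y,a) = F(x,a)F(y,b)` (an identity of meromorphic
functions, stated wherever the denominators do not vanish).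
-/

noncomputable def fTodd (x : ℂ) : ℂ := 1 - Complex.exp (-x)

noncomputable def FTodd (x h : ℂ) : ℂ := fTodd (x + h) / (fTodd x * fTodd h)

set_option maxHeartbeats 2000000 in
theorem stmt9 (x y a b : ℂ)
    (hx : fTodd x ≠ 0) (hy : fTodd y ≠ 0) (ha : fTodd a ≠ 0) (hb : fTodd b ≠ 0)
    (hab : fTodd (a + b) ≠ 0) (hxy : fTodd (x - y) ≠ 0) (hyx : fTodd (y - x) ≠ 0) :
    FTodd x (a + b) * FTodd (y - x) b + FTodd y (a + b) * FTodd (x - y) a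
      = FTodd x a * FTodd y b := by
  have ex := Complex.exp_ne_zero (-x)
  have ey := Complex.exp_ne_zero (-y)
  have h1 : -(y - x) = -y + -(-x) := by ring
  have h2 : -(x - y) = -x + -(-y) := by ring
  have h3 : ∀ s t : ℂ, -(s + t) = -s + -t := by intro s t; ring
  have hU : Complex.exp (-(-x)) = (Complex.exp (-x))⁻¹ := by rw [← Complex.exp_neg]
  have hV : Complex.exp (-(-y)) = (Complex.exp (-y))⁻¹ := by rw [← Complex.exp_neg]
  simp only [FTodd, fTodd, h1, h2, h3, Complex.exp_add, hU, hV] at *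
  generalize Complex.exp (-x) = u at *
  generalize Complex.exp (-y) = v at *
  generalize Complex.exp (-a) = p at *
  generalize Complex.exp (-b) = q at *
  have e1 : 1 - v * u⁻¹ = (u - v) * u⁻¹ := by field_simp
  have e2 : 1 - u * v⁻¹ = (v - u) * v⁻¹ := by field_simp
  rw [e1] at hyx
  rw [e2] at hxy
  rw [e1, e2]
  have huv : u - v ≠ 0 := by
    intro h; exact hyx (by rw [h, zero_mul])
  have hvu : v - u ≠ 0 := by
    intro h; exact hxy (by rw [h, zero_mul])
  field_simp
  ring
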